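/- arXiv:2401.01723 — 2 statements merged into one kernel-verified Lean document; each statement's English description precedes it below -/
import Mathlib

section
/- Fix n variables x₁,…,x_n and set x̄_i = x_i^{−1}, ζ_j(p) = x_j^p − x̄_j^p, and H̄_r = h_r(x₁,…,x_n, x̄₁,…,x̄_n) (complete homogeneous symmetric in the 2n variables). Then for any integer l ≥ 0 and any 1 ≤ j ≤ n, ζ_j(l) equals the product of the 1×n row vector ( H̄_{l−n}, (H̄_{l−n−1+k} + H̄_{l−n+1−k})_{2≤k≤n} ), the n×n matrix ( (−1)^{v−u} e_{v−u}(x₁,…,x_n,x̄₁,…,x̄_n) )_{1≤u,v≤n}, and the n×1 column vector ( ζ_j(n+1−u) )_{1≤u≤n}. -/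
/-- Complete homogeneous symmetric polynomial of degree `p` of a family `y`. -/
noncomputable def hsym {K : Type*} [CommRing K] {m : ℕ} (y : Fin m → K) (p : ℕ) : K :=
  ∑ s : Sym (Fin m) p, (s.1.map y).prod

/-- `h_r` with integer index, vanishing for `r < 0`. -/
noncomputable def hInt {K : Type*} [CommRing K] {m : ℕ} (y : Fin m → K) (r : ℤ) : K :=
  if r < 0 then 0 else hsym y r.toNat

/-- `e_r` with integer index, vanishing for `r < 0`. -/
noncomputable def eInt {K : Type*} [CommRing K] {m : ℕ} (y : Fin m → K) (r : ℤ) : K :=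
  if r < 0 then 0
  else ∑ s ∈ Finset.powersetCard r.toNat (Finset.univ : Finset (Fin m)), ∏ t ∈ s, y t

/-- The family of `2n` variables `(x₁,…,x_n, x₁⁻¹,…,x_n⁻¹)`. -/
noncomputable def xxbar {K : Type*} [Field K] (n : ℕ) (x : Fin n → K) : Fin (2 * n) → K :=
  fun t => if h : (t : ℕ) < n then x ⟨t, h⟩ else (x ⟨(t : ℕ) - n, by omega⟩)⁻¹

open Finset

section AuxRing

variable {K : Type*} [CommRing K] {m : ℕ}

/-- elementary symmetric polynomial with natural index -/
noncomputable def esN (y : Fin m → K) (s : ℕ) : K :=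
  ∑ S ∈ powersetCard s (univ : Finset (Fin m)), ∏ i ∈ S, y i

lemma eInt_natCast (y : Fin m → K) (s : ℕ) : eInt y (s : ℤ) = esN y s := by
  rw [eInt, if_neg (by omega), Int.toNat_natCast]; rfl

lemma eInt_neg (y : Fin m → K) {c : ℤ} (h : c < 0) : eInt y c = 0 := if_pos h

lemma hInt_natCast (y : Fin m → K) (N : ℕ) : hInt y (N : ℤ) = hsym y N := by
  rw [hInt, if_neg (by omega), Int.toNat_natCast]

lemma hInt_neg (y : Fin m → K) {c : ℤ} (h : c < 0) : hInt y c = 0 := if_pos h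

lemma esN_eq_zero (y : Fin m → K) {s : ℕ} (h : m < s) : esN y s = 0 := by
  rw [esN, powersetCard_eq_empty.2 (by simpa using h), sum_empty]

lemma prod_one_sub (y : Fin m → K) (z : K) :
    ∏ i : Fin m, (1 - y i * z) = ∑ s ∈ range (m + 1), (-1 : K) ^ s * esN y s * z ^ s := by
  calc ∏ i : Fin m, (1 - y i * z)
      = ∏ i ∈ univ, ((-(z * y i)) + 1) := prod_congr rfl fun i _ => by ring
    _ = ∑ t ∈ univ.powerset, (∏ i ∈ t, -(z * y i)) * ∏ _i ∈ univ \ t, (1 : K) :=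
        prod_add _ _ _
    _ = ∑ t ∈ univ.powerset, (-1 : K) ^ t.card * (∏ i ∈ t, y i) * z ^ t.card := by
        refine sum_congr rfl fun t _ => ?_
        rw [prod_const_one, mul_one]
        rw [show (fun i => -(z * y i)) = fun i => (-z) * y i from funext fun i => by ring]
        rw [prod_mul_distrib, prod_const, neg_pow]
        ring
    _ = ∑ s ∈ range (m + 1), ∑ t ∈ powersetCard s univ,
          (-1 : K) ^ t.card * (∏ i ∈ t, y i) * z ^ t.card := by
        rw [sum_powerset]
        simp [card_univ]
    _ = ∑ s ∈ range (m + 1), (-1 : K) ^ s * esN y s * z ^ s := by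
        refine sum_congr rfl fun s _ => ?_
        rw [esN, mul_sum, sum_mul]
        refine sum_congr rfl fun t ht => ?_
        rw [(mem_powersetCard.1 ht).2]

lemma one_sub_mul_mk_geom (a : K) :
    (1 - PowerSeries.C a * PowerSeries.X) * PowerSeries.mk (fun p => a ^ p) = 1 := by
  ext d
  rw [sub_mul, one_mul, mul_assoc, map_sub, PowerSeries.coeff_C_mul]
  cases d with
  | zero => simp
  | succ d => simp [PowerSeries.coeff_succ_X_mul, pow_succ, mul_comm]

lemma esN_C_comp (y : Fin m → K) (s : ℕ) :
    esN (fun i => PowerSeries.C (y i)) s = PowerSeries.C (esN y s) := by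
  rw [esN, esN, map_sum]
  exact sum_congr rfl fun t _ => (map_prod _ _ _).symm

lemma coeff_prod_one_sub (y : Fin m → K) (a : ℕ) :
    PowerSeries.coeff (R := K) a (∏ i : Fin m, (1 - PowerSeries.C (y i) * PowerSeries.X))
      = (-1 : K) ^ a * esN y a := by
  rw [prod_one_sub (fun i => PowerSeries.C (y i)) PowerSeries.X]
  rw [map_sum]
  have : ∀ s ∈ range (m + 1),
      PowerSeries.coeff (R := K) a ((-1 : PowerSeries K) ^ s * esN (fun i => PowerSeries.C (y i)) s
        * PowerSeries.X ^ s)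
      = if a = s then (-1 : K) ^ a * esN y a else 0 := by
    intro s _
    rw [esN_C_comp, show ((-1 : PowerSeries K) ^ s) = PowerSeries.C ((-1 : K) ^ s) by
      rw [map_pow, map_neg, map_one], ← map_mul, PowerSeries.coeff_C_mul,
      PowerSeries.coeff_X_pow]
    split_ifs with h
    · subst h; rw [mul_one]
    · rw [mul_zero]
  rw [sum_congr rfl this, sum_ite_eq (range (m+1)) a]
  by_cases ha : a ∈ range (m + 1)
  · rw [if_pos ha]
  · rw [if_neg ha]
    have : m < a := by simpa using ha
    rw [esN_eq_zero y this, mul_zero]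

lemma coeff_prod_geom (y : Fin m → K) (b : ℕ) :
    PowerSeries.coeff (R := K) b (∏ i : Fin m, PowerSeries.mk (fun p => y i ^ p)) = hsym y b := by
  classical
  rw [PowerSeries.coeff_prod]
  simp only [PowerSeries.coeff_mk]
  rw [hsym]
  refine (Finset.sum_bij'
    (i := fun (s : Sym (Fin m) b) (_ : s ∈ univ) => Multiset.toFinsupp s.1)
    (j := fun l hl => (⟨Finsupp.toMultiset l, by
      rw [Finsupp.card_toMultiset, Finsupp.sum_fintype _ _ (fun _ => rfl)]
      exact (Finset.mem_finsuppAntidiag.1 hl).1⟩ : Sym (Fin m) b))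
    ?_ ?_ ?_ ?_ ?_).symm
  · intro s _
    rw [Finset.mem_finsuppAntidiag]
    refine ⟨?_, fun i _ => mem_univ i⟩
    have h1 : Multiset.card (Finsupp.toMultiset (Multiset.toFinsupp s.1)) = b := by
      rw [Multiset.toFinsupp_toMultiset]; exact s.2
    rw [Finsupp.card_toMultiset, Finsupp.sum_fintype _ _ (fun _ => rfl)] at h1
    exact h1
  · intro l hl
    exact mem_univ _
  · intro s _
    exact Subtype.ext (Multiset.toFinsupp_toMultiset s.1)
  · intro l hl
    exact Finsupp.toMultiset_toFinsupp l
  · intro s _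
    rw [Finset.prod_multiset_map_count]
    refine Finset.prod_subset (Finset.subset_univ _) ?_
    intro i _ hi
    rw [Multiset.count_eq_zero_of_notMem (by simpa using hi), pow_zero]

lemma conv (y : Fin m → K) (N : ℕ) :
    ∑ a ∈ range (N + 1), (-1 : K) ^ a * esN y a * hsym y (N - a)
      = if N = 0 then 1 else 0 := by
  have hAB : (∏ i : Fin m, (1 - PowerSeries.C (y i) * PowerSeries.X))
      * (∏ i : Fin m, PowerSeries.mk (fun p => y i ^ p)) = 1 := by
    rw [← prod_mul_distrib]
    exact prod_eq_one fun i _ => one_sub_mul_mk_geom (y i)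
  have := congrArg (PowerSeries.coeff (R := K) N) hAB
  rw [PowerSeries.coeff_mul, PowerSeries.coeff_one] at this
  rw [Finset.Nat.sum_antidiagonal_eq_sum_range_succ
    (f := fun a b => PowerSeries.coeff (R := K) a (∏ i : Fin m, (1 - PowerSeries.C (y i) * PowerSeries.X))
      * PowerSeries.coeff (R := K) b (∏ i : Fin m, PowerSeries.mk (fun p => y i ^ p)))] at this
  rw [← this]
  refine sum_congr rfl fun a _ => ?_
  rw [coeff_prod_one_sub, coeff_prod_geom]

end AuxRing

section AuxField

variable {K : Type*} [Field K] {n : ℕ}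

/-- the permutation of `Fin (2*n)` swapping the two halves -/
def sw {n : ℕ} (i : Fin (2 * n)) : Fin (2 * n) :=
  ⟨((i : ℕ) + n) % (2 * n), Nat.mod_lt _ (lt_of_le_of_lt (Nat.zero_le _) i.isLt)⟩

lemma sw_val {n : ℕ} (i : Fin (2 * n)) :
    ((sw i : Fin (2 * n)) : ℕ) = if (i : ℕ) < n then (i : ℕ) + n else (i : ℕ) - n := by
  have h2 : (i : ℕ) < 2 * n := i.isLt
  rcases lt_or_ge (i : ℕ) n with h | h
  · rw [if_pos h]
    exact Nat.mod_eq_of_lt (by omega)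
  · rw [if_neg (not_lt.2 h)]
    show ((i : ℕ) + n) % (2 * n) = (i : ℕ) - n
    have e : (i : ℕ) + n = ((i : ℕ) - n) + 1 * (2 * n) := by omega
    rw [e, Nat.add_mul_mod_self_right, Nat.mod_eq_of_lt (by omega)]

lemma sw_sw {n : ℕ} (i : Fin (2 * n)) : sw (sw i) = i := by
  have h2 : (i : ℕ) < 2 * n := i.isLt
  apply Fin.ext
  rw [sw_val (sw i), sw_val i]
  split_ifs <;> omega

lemma sw_injective {n : ℕ} : Function.Injective (sw (n := n)) :=
  Function.LeftInverse.injective sw_sw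

lemma xxbar_sw (x : Fin n → K) (i : Fin (2 * n)) :
    xxbar n x (sw i) = (xxbar n x i)⁻¹ := by
  have h2 : (i : ℕ) < 2 * n := i.isLt
  rcases lt_or_ge (i : ℕ) n with h | h
  · have hs : ¬ ((sw i : Fin (2 * n)) : ℕ) < n := by rw [sw_val, if_pos h]; omega
    rw [xxbar, xxbar]
    rw [dif_neg hs, dif_pos h]
    have harg : (⟨((sw i : Fin (2 * n)) : ℕ) - n, by have := (sw i).isLt; omega⟩ : Fin n)
        = ⟨(i : ℕ), h⟩ := by
      apply Fin.ext
      show ((sw i : Fin (2 * n)) : ℕ) - n = (i : ℕ)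
      rw [sw_val, if_pos h]; omega
    exact congrArg (fun t => (x t)⁻¹) harg
  · have hs : ((sw i : Fin (2 * n)) : ℕ) < n := by rw [sw_val, if_neg (not_lt.2 h)]; omega
    rw [xxbar, xxbar]
    rw [dif_pos hs, dif_neg (not_lt.2 h), inv_inv]
    have harg : (⟨((sw i : Fin (2 * n)) : ℕ), hs⟩ : Fin n) = ⟨(i : ℕ) - n, by omega⟩ := by
      apply Fin.ext
      show ((sw i : Fin (2 * n)) : ℕ) = (i : ℕ) - n
      rw [sw_val, if_neg (not_lt.2 h)]
    exact congrArg x harg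

lemma xxbar_ne_zero (x : Fin n → K) (hx : ∀ i, x i ≠ 0) (i : Fin (2 * n)) :
    xxbar n x i ≠ 0 := by
  rw [xxbar]
  split_ifs
  · exact hx _
  · exact inv_ne_zero (hx _)

lemma sw_ne {n : ℕ} (i : Fin (2 * n)) : sw i ≠ i := by
  intro h
  have := congrArg (Fin.val) h
  rw [sw_val] at this
  have h2 : (i : ℕ) < 2 * n := i.isLt
  split_ifs at this <;> omega

lemma prod_xxbar (x : Fin n → K) (hx : ∀ i, x i ≠ 0) :
    ∏ i : Fin (2 * n), xxbar n x i = 1 := by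
  refine Finset.prod_involution (fun i _ => sw i) (fun i _ => ?_) (fun i _ _ => sw_ne i)
    (fun i _ => mem_univ _) (fun i _ => sw_sw i)
  rw [xxbar_sw, mul_inv_cancel₀ (xxbar_ne_zero x hx i)]

lemma esN_palindrome (x : Fin n → K) (hx : ∀ i, x i ≠ 0) {s : ℕ} (hs : s ≤ 2 * n) :
    esN (xxbar n x) s = esN (xxbar n x) (2 * n - s) := by
  classical
  rw [esN, esN]
  refine Finset.sum_nbij' (i := fun S => image sw Sᶜ) (j := fun T => (image sw T)ᶜ)
    ?_ ?_ ?_ ?_ ?_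
  · intro S hS
    rw [mem_powersetCard] at hS ⊢
    refine ⟨subset_univ _, ?_⟩
    rw [card_image_of_injective _ sw_injective, card_compl, Fintype.card_fin, hS.2]
  · intro T hT
    rw [mem_powersetCard] at hT ⊢
    refine ⟨subset_univ _, ?_⟩
    rw [card_compl, card_image_of_injective _ sw_injective, Fintype.card_fin, hT.2]
    omega
  · intro S _
    show (image sw (image sw Sᶜ))ᶜ = S
    rw [image_image, show sw (n := n) ∘ sw = id from funext sw_sw, image_id, compl_compl]
  · intro T _
    show image sw ((image sw T)ᶜᶜ) = T
    rw [compl_compl, image_image, show sw (n := n) ∘ sw = id from funext sw_sw, image_id]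
  · intro S hS
    show ∏ i ∈ S, xxbar n x i = ∏ i ∈ image sw Sᶜ, xxbar n x i
    rw [prod_image (fun a _ b _ h => sw_injective h)]
    have h1 : ∏ i ∈ Sᶜ, xxbar n x (sw i) = (∏ i ∈ Sᶜ, xxbar n x i)⁻¹ := by
      rw [← prod_inv_distrib]
      exact prod_congr rfl fun i _ => xxbar_sw x i
    rw [h1]
    refine eq_inv_of_mul_eq_one_left ?_
    rw [prod_mul_prod_compl, prod_xxbar x hx]

lemma prod_xxbar_eq_zero_inv (x : Fin n → K) (hx : ∀ i, x i ≠ 0) (j : Fin n) :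
    ∏ i : Fin (2 * n), (1 - xxbar n x i * (x j)⁻¹) = 0 := by
  have hj : (j : ℕ) < 2 * n := by have := j.isLt; omega
  refine prod_eq_zero (mem_univ (⟨(j : ℕ), hj⟩ : Fin (2 * n))) ?_
  have : xxbar n x ⟨(j : ℕ), hj⟩ = x j := by
    rw [xxbar, dif_pos j.isLt]
  rw [this, mul_inv_cancel₀ (hx j), sub_self]

lemma prod_xxbar_eq_zero (x : Fin n → K) (hx : ∀ i, x i ≠ 0) (j : Fin n) :
    ∏ i : Fin (2 * n), (1 - xxbar n x i * x j) = 0 := by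
  have hj : n + (j : ℕ) < 2 * n := by have := j.isLt; omega
  refine prod_eq_zero (mem_univ (⟨n + (j : ℕ), hj⟩ : Fin (2 * n))) ?_
  have : xxbar n x ⟨n + (j : ℕ), hj⟩ = (x j)⁻¹ := by
    rw [xxbar, dif_neg (show ¬(((⟨n + (j : ℕ), hj⟩ : Fin (2 * n)) : ℕ) < n) by
      show ¬(n + (j : ℕ) < n); omega)]
    have harg : (⟨((⟨n + (j : ℕ), hj⟩ : Fin (2 * n)) : ℕ) - n, by show n + (j:ℕ) - n < n; have := j.isLt; omega⟩ : Fin n) = j := by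
      apply Fin.ext
      show n + (j : ℕ) - n = (j : ℕ)
      omega
    exact congrArg (fun t => (x t)⁻¹) harg
  rw [this, inv_mul_cancel₀ (hx j), sub_self]

lemma annihilate (x : Fin n → K) (hx : ∀ i, x i ≠ 0) (j : Fin n) (M : ℤ) :
    ∑ s ∈ range (2 * n + 1), (-1 : K) ^ s * esN (xxbar n x) s
      * (x j ^ (M - (s : ℕ)) - (x j)⁻¹ ^ (M - (s : ℕ))) = 0 := by
  have hz := hx j
  have e1 : ∀ s : ℕ, x j ^ (M - (s : ℕ)) = x j ^ M * ((x j)⁻¹) ^ s := by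
    intro s
    rw [zpow_sub₀ hz, div_eq_mul_inv, ← inv_zpow, zpow_natCast]
  have e2 : ∀ s : ℕ, (x j)⁻¹ ^ (M - (s : ℕ)) = ((x j)⁻¹) ^ M * (x j) ^ s := by
    intro s
    rw [zpow_sub₀ (inv_ne_zero hz), div_eq_mul_inv, ← inv_zpow, inv_inv, zpow_natCast]
  have split : ∑ s ∈ range (2 * n + 1), (-1 : K) ^ s * esN (xxbar n x) s
      * (x j ^ (M - (s : ℕ)) - (x j)⁻¹ ^ (M - (s : ℕ)))
      = x j ^ M * (∑ s ∈ range (2 * n + 1), (-1 : K) ^ s * esN (xxbar n x) s * ((x j)⁻¹) ^ s)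
        - (x j)⁻¹ ^ M
          * (∑ s ∈ range (2 * n + 1), (-1 : K) ^ s * esN (xxbar n x) s * (x j) ^ s) := by
    rw [mul_sum, mul_sum, ← sum_sub_distrib]
    refine sum_congr rfl fun s _ => ?_
    rw [e1 s, e2 s]
    ring
  rw [split, ← prod_one_sub, ← prod_one_sub, prod_xxbar_eq_zero_inv x hx j,
    prod_xxbar_eq_zero x hx j, mul_zero, mul_zero, sub_zero]

/-- The partial sums `Z_q`. -/
noncomputable def Zf (x : Fin n → K) (j : Fin n) (q : ℕ) : K :=
  ∑ s ∈ range q, (-1 : K) ^ s * esN (xxbar n x) s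
    * (x j ^ (q - s) - (x j)⁻¹ ^ (q - s))

end AuxField

section ZLemmas

variable {K : Type*} [Field K] {n : ℕ}

lemma neg_one_pow_refl (t : ℕ) (h : t ≤ 2 * n) : (-1 : K) ^ (2 * n - t) = (-1 : K) ^ t := by
  have e1 : (-1 : K) ^ (2 * n - t) * (-1 : K) ^ t = 1 := by
    rw [← pow_add, show 2 * n - t + t = 2 * n by omega, pow_mul]
    norm_num
  have e2 : (-1 : K) ^ t * (-1 : K) ^ t = 1 := by
    rw [← pow_add, ← two_mul, pow_mul]
    norm_num
  calc (-1 : K) ^ (2 * n - t) = (-1 : K) ^ (2 * n - t) * ((-1 : K) ^ t * (-1 : K) ^ t) := by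
        rw [e2, mul_one]
    _ = ((-1 : K) ^ (2 * n - t) * (-1 : K) ^ t) * (-1 : K) ^ t := by ring
    _ = (-1 : K) ^ t := by rw [e1, one_mul]

lemma zeta_cast (x : Fin n → K) (j : Fin n) (p : ℕ) :
    x j ^ ((p : ℤ)) - (x j)⁻¹ ^ ((p : ℤ)) = x j ^ p - (x j)⁻¹ ^ p := by
  rw [zpow_natCast, zpow_natCast]

lemma Z_big (x : Fin n → K) (hx : ∀ i, x i ≠ 0) (j : Fin n) {q : ℕ} (hq : 2 * n ≤ q) :
    Zf x j q = 0 := by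
  set R := max (2 * n + 1) q with hR
  have h1 : Zf x j q = ∑ s ∈ range R,
      (-1 : K) ^ s * esN (xxbar n x) s * (x j ^ (q - s) - (x j)⁻¹ ^ (q - s)) := by
    rw [Zf]
    refine sum_subset (range_subset_range.2 (by omega)) ?_
    intro s _ hs
    rw [mem_range, not_lt] at hs
    rw [show q - s = 0 by omega, pow_zero, pow_zero, sub_self, mul_zero]
  have h2 : ∑ s ∈ range R,
      (-1 : K) ^ s * esN (xxbar n x) s * (x j ^ (q - s) - (x j)⁻¹ ^ (q - s))
      = ∑ s ∈ range R,
      (-1 : K) ^ s * esN (xxbar n x) s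
        * (x j ^ ((q : ℤ) - (s : ℕ)) - (x j)⁻¹ ^ ((q : ℤ) - (s : ℕ))) := by
    refine sum_congr rfl fun s _ => ?_
    rcases lt_or_ge s q with h | h
    · rw [show ((q : ℤ) - (s : ℕ)) = ((q - s : ℕ) : ℤ) by omega, zeta_cast]
    · rcases eq_or_lt_of_le h with h' | h'
      · rw [← h']
        norm_num [show ((q : ℤ) - ((q : ℕ) : ℤ)) = 0 by omega, Nat.sub_self]
      · rw [esN_eq_zero _ (by omega : 2 * n < s), mul_zero, zero_mul, zero_mul]
  have h3 : ∑ s ∈ range R,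
      (-1 : K) ^ s * esN (xxbar n x) s
        * (x j ^ ((q : ℤ) - (s : ℕ)) - (x j)⁻¹ ^ ((q : ℤ) - (s : ℕ)))
      = ∑ s ∈ range (2 * n + 1),
      (-1 : K) ^ s * esN (xxbar n x) s
        * (x j ^ ((q : ℤ) - (s : ℕ)) - (x j)⁻¹ ^ ((q : ℤ) - (s : ℕ))) := by
    symm
    refine sum_subset (range_subset_range.2 (by omega)) ?_
    intro s _ hs
    rw [mem_range, not_lt] at hs
    rw [esN_eq_zero _ (by omega : 2 * n < s), mul_zero, zero_mul]
  rw [h1, h2, h3, annihilate x hx j]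

lemma Z_tail (x : Fin n → K) (hx : ∀ i, x i ≠ 0) (j : Fin n) {q : ℕ} (hq : q ≤ 2 * n) :
    Zf x j q = ∑ s ∈ Ico q (2 * n + 1),
      (-1 : K) ^ s * esN (xxbar n x) s * (x j ^ (s - q) - (x j)⁻¹ ^ (s - q)) := by
  have ann := annihilate x hx j (q : ℤ)
  rw [range_eq_Ico, ← sum_Ico_consecutive _ (Nat.zero_le q) (by omega : q ≤ 2 * n + 1)] at ann
  have head : ∑ s ∈ Ico 0 q,
      (-1 : K) ^ s * esN (xxbar n x) s
        * (x j ^ ((q : ℤ) - (s : ℕ)) - (x j)⁻¹ ^ ((q : ℤ) - (s : ℕ))) = Zf x j q := by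
    rw [Zf, range_eq_Ico]
    refine sum_congr rfl fun s hs => ?_
    rw [mem_Ico] at hs
    rw [show ((q : ℤ) - (s : ℕ)) = ((q - s : ℕ) : ℤ) by omega, zeta_cast]
  have tail : ∑ s ∈ Ico q (2 * n + 1),
      (-1 : K) ^ s * esN (xxbar n x) s
        * (x j ^ ((q : ℤ) - (s : ℕ)) - (x j)⁻¹ ^ ((q : ℤ) - (s : ℕ)))
      = - ∑ s ∈ Ico q (2 * n + 1),
      (-1 : K) ^ s * esN (xxbar n x) s * (x j ^ (s - q) - (x j)⁻¹ ^ (s - q)) := by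
    rw [← sum_neg_distrib]
    refine sum_congr rfl fun s hs => ?_
    rw [mem_Ico] at hs
    have e : ((q : ℤ) - (s : ℕ)) = -(((s - q : ℕ) : ℤ)) := by omega
    rw [e, zpow_neg, zpow_neg, zpow_natCast, zpow_natCast, inv_pow, inv_inv]
    ring
  rw [head, tail] at ann
  linear_combination ann

lemma Z_pal (x : Fin n → K) (hx : ∀ i, x i ≠ 0) (j : Fin n) {q : ℕ} (hq : q ≤ 2 * n) :
    Zf x j q = Zf x j (2 * n - q) := by
  rw [Z_tail x hx j hq]
  have main : ∑ s ∈ Ico q (2 * n + 1),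
      (-1 : K) ^ s * esN (xxbar n x) s * (x j ^ (s - q) - (x j)⁻¹ ^ (s - q))
      = ∑ t ∈ range ((2 * n - q) + 1), (-1 : K) ^ t * esN (xxbar n x) t
          * (x j ^ ((2 * n - q) - t) - (x j)⁻¹ ^ ((2 * n - q) - t)) := by
    refine sum_nbij' (i := fun s => 2 * n - s) (j := fun t => 2 * n - t) ?_ ?_ ?_ ?_ ?_
    · intro s hs; rw [mem_Ico] at hs; rw [mem_range]; show 2 * n - s < 2 * n - q + 1; omega
    · intro t ht; rw [mem_range] at ht; rw [mem_Ico]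
      show q ≤ 2 * n - t ∧ 2 * n - t < 2 * n + 1; omega
    · intro s hs; rw [mem_Ico] at hs; show 2 * n - (2 * n - s) = s; omega
    · intro t ht; rw [mem_range] at ht; show 2 * n - (2 * n - t) = t; omega
    · intro s hs
      rw [mem_Ico] at hs
      show _ = (-1 : K) ^ (2 * n - s) * esN (xxbar n x) (2 * n - s)
        * (x j ^ ((2 * n - q) - (2 * n - s)) - (x j)⁻¹ ^ ((2 * n - q) - (2 * n - s)))
      rw [neg_one_pow_refl s (by omega), ← esN_palindrome x hx (show s ≤ 2 * n by omega),
        show (2 * n - q) - (2 * n - s) = s - q by omega]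
  rw [main, sum_range_succ, Zf, show (2 * n - q) - (2 * n - q) = 0 by omega, pow_zero, pow_zero,
    sub_self, mul_zero, add_zero]

end ZLemmas

section MainSum

variable {K : Type*} [Field K] {n : ℕ}

lemma main_sum (x : Fin n → K) (hx : ∀ i, x i ≠ 0) (j : Fin n) (l : ℕ) (hn : 0 < n) :
    ∑ k ∈ range n,
      (if k = 0 then hInt (xxbar n x) ((l : ℤ) - n)
        else hInt (xxbar n x) ((l : ℤ) - n + k) + hInt (xxbar n x) ((l : ℤ) - n - k))
        * Zf x j (n - k)
      = x j ^ l - (x j)⁻¹ ^ l := by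
  have step2 : ∑ k ∈ range n,
      (if k = 0 then hInt (xxbar n x) ((l : ℤ) - n)
        else hInt (xxbar n x) ((l : ℤ) - n + k) + hInt (xxbar n x) ((l : ℤ) - n - k))
        * Zf x j (n - k)
      = (∑ k ∈ range n, hInt (xxbar n x) ((l : ℤ) - n + k) * Zf x j (n - k))
        + ∑ k ∈ range n,
            (if k = 0 then 0 else hInt (xxbar n x) ((l : ℤ) - n - k) * Zf x j (n + k)) := by
    rw [← sum_add_distrib]
    refine sum_congr rfl fun k hk => ?_
    rw [mem_range] at hk
    by_cases h0 : k = 0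
    · subst h0
      rw [if_pos rfl, if_pos rfl, add_zero]
      norm_num
    · rw [if_neg h0, if_neg h0, add_mul]
      congr 1
      rw [Z_pal x hx j (show n - k ≤ 2 * n by omega), show 2 * n - (n - k) = n + k by omega]
  have step3 : ∑ k ∈ range n, hInt (xxbar n x) ((l : ℤ) - n + k) * Zf x j (n - k)
      = ∑ q ∈ Ioc 0 n, hInt (xxbar n x) ((l : ℤ) - q) * Zf x j q := by
    refine sum_nbij' (i := fun k => n - k) (j := fun q => n - q) ?_ ?_ ?_ ?_ ?_
    · intro k hk; rw [mem_range] at hk; rw [mem_Ioc]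
      show 0 < n - k ∧ n - k ≤ n; omega
    · intro q hq; rw [mem_Ioc] at hq; rw [mem_range]
      show n - q < n; omega
    · intro k hk; rw [mem_range] at hk; show n - (n - k) = k; omega
    · intro q hq; rw [mem_Ioc] at hq; show n - (n - q) = q; omega
    · intro k hk; rw [mem_range] at hk
      show hInt (xxbar n x) ((l : ℤ) - n + k) * Zf x j (n - k)
        = hInt (xxbar n x) ((l : ℤ) - ((n - k : ℕ) : ℤ)) * Zf x j (n - k)
      congr 2
      omega
  have step4 : ∑ k ∈ range n,
      (if k = 0 then 0 else hInt (xxbar n x) ((l : ℤ) - n - k) * Zf x j (n + k))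
      = ∑ q ∈ Ioc n (2 * n - 1), hInt (xxbar n x) ((l : ℤ) - q) * Zf x j q := by
    have hsub : Ico 1 n ⊆ range n := fun a ha => by
      rw [mem_Ico] at ha; rw [mem_range]; omega
    have h1 : ∑ k ∈ range n,
        (if k = 0 then 0 else hInt (xxbar n x) ((l : ℤ) - n - k) * Zf x j (n + k))
        = ∑ k ∈ Ico 1 n, hInt (xxbar n x) ((l : ℤ) - n - k) * Zf x j (n + k) := by
      rw [← sum_subset hsub (fun a ha hna => ?_)]
      · refine sum_congr rfl fun k hk => ?_
        rw [mem_Ico] at hk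
        rw [if_neg (by omega)]
      · rw [mem_range] at ha
        rw [mem_Ico] at hna
        rw [if_pos (by omega)]
    rw [h1]
    refine sum_nbij' (i := fun k => n + k) (j := fun q => q - n) ?_ ?_ ?_ ?_ ?_
    · intro k hk; rw [mem_Ico] at hk; rw [mem_Ioc]
      show n < n + k ∧ n + k ≤ 2 * n - 1; omega
    · intro q hq; rw [mem_Ioc] at hq; rw [mem_Ico]
      show 1 ≤ q - n ∧ q - n < n; omega
    · intro k hk; rw [mem_Ico] at hk; show n + k - n = k; omega
    · intro q hq; rw [mem_Ioc] at hq; show n + (q - n) = q; omega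
    · intro k hk; rw [mem_Ico] at hk
      show hInt (xxbar n x) ((l : ℤ) - n - k) * Zf x j (n + k)
        = hInt (xxbar n x) ((l : ℤ) - ((n + k : ℕ) : ℤ)) * Zf x j (n + k)
      congr 2
      omega
  rw [step2, step3, step4,
    sum_Ioc_consecutive _ (Nat.zero_le n) (show n ≤ 2 * n - 1 by omega)]
  have step6 : ∑ q ∈ Ioc 0 (2 * n - 1), hInt (xxbar n x) ((l : ℤ) - q) * Zf x j q
      = ∑ q ∈ Ioc 0 (2 * n + l), hInt (xxbar n x) ((l : ℤ) - q) * Zf x j q := by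
    refine sum_subset (Ioc_subset_Ioc_right (by omega)) (fun q hq hnq => ?_)
    rw [mem_Ioc] at hq
    rw [mem_Ioc] at hnq
    rw [Z_big x hx j (show 2 * n ≤ q by omega), mul_zero]
  rw [step6]
  have expand : ∀ q ∈ Ioc 0 (2 * n + l), hInt (xxbar n x) ((l : ℤ) - q) * Zf x j q
      = ∑ s ∈ range (2 * n + l),
          (if s < q then hInt (xxbar n x) ((l : ℤ) - q)
            * ((-1 : K) ^ s * esN (xxbar n x) s * (x j ^ (q - s) - (x j)⁻¹ ^ (q - s))) else 0) := by
    intro q hq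
    rw [mem_Ioc] at hq
    rw [Zf, mul_sum,
      show range q = filter (fun s => s < q) (range (2 * n + l)) from by
        ext a; simp only [mem_filter, mem_range]; omega,
      sum_filter]
  rw [sum_congr rfl expand, sum_comm]
  have collapse : ∀ s ∈ range (2 * n + l),
      (∑ q ∈ Ioc 0 (2 * n + l),
        (if s < q then hInt (xxbar n x) ((l : ℤ) - q)
          * ((-1 : K) ^ s * esN (xxbar n x) s * (x j ^ (q - s) - (x j)⁻¹ ^ (q - s))) else 0))
      = ∑ m ∈ range (2 * n + l - s),
          hInt (xxbar n x) ((l : ℤ) - ((s + 1 + m : ℕ) : ℤ))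
            * ((-1 : K) ^ s * esN (xxbar n x) s * (x j ^ (m + 1) - (x j)⁻¹ ^ (m + 1))) := by
    intro s hs
    rw [mem_range] at hs
    rw [← sum_filter,
      show filter (fun q => s < q) (Ioc 0 (2 * n + l)) = Ico (s + 1) (2 * n + l + 1) from by
        ext a; simp only [mem_filter, mem_Ioc, mem_Ico]; omega,
      sum_Ico_eq_sum_range,
      show 2 * n + l + 1 - (s + 1) = 2 * n + l - s by omega]
    refine sum_congr rfl fun m hm => ?_
    rw [mem_range] at hm
    rw [show s + 1 + m - s = m + 1 by omega]
  rw [sum_congr rfl collapse]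
  have swap : ∑ s ∈ range (2 * n + l), ∑ m ∈ range (2 * n + l - s),
      hInt (xxbar n x) ((l : ℤ) - ((s + 1 + m : ℕ) : ℤ))
        * ((-1 : K) ^ s * esN (xxbar n x) s * (x j ^ (m + 1) - (x j)⁻¹ ^ (m + 1)))
      = ∑ m ∈ range (2 * n + l), ∑ s ∈ range (2 * n + l - m),
        hInt (xxbar n x) ((l : ℤ) - ((s + 1 + m : ℕ) : ℤ))
          * ((-1 : K) ^ s * esN (xxbar n x) s * (x j ^ (m + 1) - (x j)⁻¹ ^ (m + 1))) := by
    have lpad : ∀ s ∈ range (2 * n + l), ∑ m ∈ range (2 * n + l - s),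
        hInt (xxbar n x) ((l : ℤ) - ((s + 1 + m : ℕ) : ℤ))
          * ((-1 : K) ^ s * esN (xxbar n x) s * (x j ^ (m + 1) - (x j)⁻¹ ^ (m + 1)))
        = ∑ m ∈ range (2 * n + l),
          (if m < 2 * n + l - s then hInt (xxbar n x) ((l : ℤ) - ((s + 1 + m : ℕ) : ℤ))
            * ((-1 : K) ^ s * esN (xxbar n x) s * (x j ^ (m + 1) - (x j)⁻¹ ^ (m + 1))) else 0) := by
      intro s hs
      rw [mem_range] at hs
      rw [show range (2 * n + l - s) = filter (fun m => m < 2 * n + l - s) (range (2 * n + l))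
          from by ext a; simp only [mem_filter, mem_range]; omega, sum_filter]
    rw [sum_congr rfl lpad, sum_comm]
    refine sum_congr rfl fun m hm => ?_
    rw [mem_range] at hm
    rw [← sum_filter,
      show filter (fun s => m < 2 * n + l - s) (range (2 * n + l)) = range (2 * n + l - m) from by
        ext a; simp only [mem_filter, mem_range]; omega]
  rw [swap]
  have wcomp : ∀ m ∈ range (2 * n + l),
      (∑ s ∈ range (2 * n + l - m),
        hInt (xxbar n x) ((l : ℤ) - ((s + 1 + m : ℕ) : ℤ))
          * ((-1 : K) ^ s * esN (xxbar n x) s * (x j ^ (m + 1) - (x j)⁻¹ ^ (m + 1))))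
      = (x j ^ (m + 1) - (x j)⁻¹ ^ (m + 1)) * (if l = m + 1 then 1 else 0) := by
    intro m hm
    rw [mem_range] at hm
    have factor : ∑ s ∈ range (2 * n + l - m),
        hInt (xxbar n x) ((l : ℤ) - ((s + 1 + m : ℕ) : ℤ))
          * ((-1 : K) ^ s * esN (xxbar n x) s * (x j ^ (m + 1) - (x j)⁻¹ ^ (m + 1)))
        = (x j ^ (m + 1) - (x j)⁻¹ ^ (m + 1))
          * ∑ s ∈ range (2 * n + l - m),
              (-1 : K) ^ s * esN (xxbar n x) s * hInt (xxbar n x) ((l : ℤ) - ((s + 1 + m : ℕ) : ℤ)) := by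
      rw [mul_sum]
      exact sum_congr rfl fun s _ => by ring
    rw [factor]
    congr 1
    by_cases hml : m + 1 ≤ l
    · have shrink : ∑ s ∈ range (l - m),
          (-1 : K) ^ s * esN (xxbar n x) s * hInt (xxbar n x) ((l : ℤ) - ((s + 1 + m : ℕ) : ℤ))
          = ∑ s ∈ range (2 * n + l - m),
            (-1 : K) ^ s * esN (xxbar n x) s * hInt (xxbar n x) ((l : ℤ) - ((s + 1 + m : ℕ) : ℤ)) := by
        refine sum_subset (range_subset_range.2 (by omega)) (fun s hs hns => ?_)
        rw [mem_range] at hs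
        rw [mem_range] at hns
        rw [hInt_neg _ (show (l : ℤ) - ((s + 1 + m : ℕ) : ℤ) < 0 by omega), mul_zero]
      rw [← shrink, show l - m = (l - m - 1) + 1 by omega]
      have bridge : ∀ s ∈ range ((l - m - 1) + 1),
          (-1 : K) ^ s * esN (xxbar n x) s * hInt (xxbar n x) ((l : ℤ) - ((s + 1 + m : ℕ) : ℤ))
          = (-1 : K) ^ s * esN (xxbar n x) s * hsym (xxbar n x) ((l - m - 1) - s) := by
        intro s hs
        rw [mem_range] at hs
        rw [show (l : ℤ) - ((s + 1 + m : ℕ) : ℤ) = (((l - m - 1) - s : ℕ) : ℤ) by omega,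
          hInt_natCast]
      rw [sum_congr rfl bridge, conv (xxbar n x) (l - m - 1)]
      by_cases h0 : l = m + 1
      · rw [if_pos (show l - m - 1 = 0 by omega), if_pos h0]
      · rw [if_neg (show ¬(l - m - 1 = 0) by omega), if_neg h0]
    · rw [if_neg (by omega), sum_eq_zero]
      intro s hs
      rw [hInt_neg _ (show (l : ℤ) - ((s + 1 + m : ℕ) : ℤ) < 0 by omega), mul_zero]
  rw [sum_congr rfl wcomp]
  cases l with
  | zero =>
    rw [sum_eq_zero (fun m hm => by rw [if_neg (by omega), mul_zero])]
    norm_num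
  | succ l' =>
    rw [sum_eq_single_of_mem l' (by rw [mem_range]; omega)
      (fun m hm hne => by rw [if_neg (by omega), mul_zero])]
    rw [if_pos rfl, mul_one]


end MainSum

/-- Fulton–Harris Lemma A.54 -/
theorem fulton_harris_A54 {K : Type*} [Field K] (n : ℕ) (x : Fin n → K)
    (hx : ∀ i, x i ≠ 0) (l : ℕ) (j : Fin n) :
    x j ^ l - (x j)⁻¹ ^ l
      = ((Matrix.of fun _ : Fin 1 => fun k : Fin n =>
            if (k : ℕ) = 0 then hInt (xxbar n x) ((l : ℤ) - n)
            else hInt (xxbar n x) ((l : ℤ) - n + (k : ℕ))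
              + hInt (xxbar n x) ((l : ℤ) - n - (k : ℕ))) *
          (Matrix.of fun u v : Fin n =>
            (-1 : K) ^ (((v : ℕ) : ℤ) - ((u : ℕ) : ℤ)) *
              eInt (xxbar n x) (((v : ℕ) : ℤ) - ((u : ℕ) : ℤ))) *
          (Matrix.of fun u : Fin n => fun _ : Fin 1 =>
            x j ^ (n - (u : ℕ)) - (x j)⁻¹ ^ (n - (u : ℕ)))) 0 0 := by
  classical
  have hn : 0 < n := j.pos
  rw [Matrix.mul_apply]
  simp only [Matrix.mul_apply, Matrix.of_apply]
  simp only [Finset.sum_mul]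
  rw [Finset.sum_comm]
  have key : ∀ k : Fin n, ∑ v : Fin n,
      ((if ((k : ℕ)) = 0 then hInt (xxbar n x) ((l : ℤ) - n)
          else hInt (xxbar n x) ((l : ℤ) - n + (k : ℕ))
            + hInt (xxbar n x) ((l : ℤ) - n - (k : ℕ)))
        * ((-1 : K) ^ (((v : ℕ) : ℤ) - ((k : ℕ) : ℤ))
            * eInt (xxbar n x) (((v : ℕ) : ℤ) - ((k : ℕ) : ℤ))))
        * (x j ^ (n - (v : ℕ)) - (x j)⁻¹ ^ (n - (v : ℕ)))
      = (if ((k : ℕ)) = 0 then hInt (xxbar n x) ((l : ℤ) - n)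
          else hInt (xxbar n x) ((l : ℤ) - n + (k : ℕ))
            + hInt (xxbar n x) ((l : ℤ) - n - (k : ℕ)))
        * Zf x j (n - (k : ℕ)) := by
    intro k
    rw [sum_congr rfl (fun v _ => mul_assoc _ _ _), ← mul_sum]
    congr 1
    have conv1 : ∑ v : Fin n,
        ((-1 : K) ^ (((v : ℕ) : ℤ) - ((k : ℕ) : ℤ))
            * eInt (xxbar n x) (((v : ℕ) : ℤ) - ((k : ℕ) : ℤ)))
          * (x j ^ (n - (v : ℕ)) - (x j)⁻¹ ^ (n - (v : ℕ)))
        = ∑ v ∈ range n,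
          ((-1 : K) ^ ((v : ℤ) - ((k : ℕ) : ℤ)) * eInt (xxbar n x) ((v : ℤ) - ((k : ℕ) : ℤ)))
            * (x j ^ (n - v) - (x j)⁻¹ ^ (n - v)) :=
      Fin.sum_univ_eq_sum_range (fun v =>
        ((-1 : K) ^ ((v : ℤ) - ((k : ℕ) : ℤ)) * eInt (xxbar n x) ((v : ℤ) - ((k : ℕ) : ℤ)))
          * (x j ^ (n - v) - (x j)⁻¹ ^ (n - v))) n
    rw [conv1]
    have trunc : ∑ v ∈ range n,
        ((-1 : K) ^ ((v : ℤ) - ((k : ℕ) : ℤ)) * eInt (xxbar n x) ((v : ℤ) - ((k : ℕ) : ℤ)))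
          * (x j ^ (n - v) - (x j)⁻¹ ^ (n - v))
        = ∑ v ∈ Ico (k : ℕ) n,
        ((-1 : K) ^ ((v : ℤ) - ((k : ℕ) : ℤ)) * eInt (xxbar n x) ((v : ℤ) - ((k : ℕ) : ℤ)))
          * (x j ^ (n - v) - (x j)⁻¹ ^ (n - v)) := by
      symm
      refine sum_subset (fun a ha => by rw [mem_Ico] at ha; rw [mem_range]; omega)
        (fun a ha hna => ?_)
      rw [mem_range] at ha
      rw [mem_Ico] at hna
      rw [eInt_neg _ (show ((a : ℤ) - ((k : ℕ) : ℤ)) < 0 by omega), mul_zero, zero_mul]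
    rw [trunc, sum_Ico_eq_sum_range, Zf]
    refine sum_congr rfl fun s hs => ?_
    rw [mem_range] at hs
    rw [show ((((k : ℕ) + s : ℕ)) : ℤ) - ((k : ℕ) : ℤ) = ((s : ℕ) : ℤ) by omega,
      zpow_natCast, eInt_natCast, show n - ((k : ℕ) + s) = n - (k : ℕ) - s by omega]
  rw [sum_congr rfl (fun k _ => key k)]
  rw [Fin.sum_univ_eq_sum_range (fun k =>
    (if k = 0 then hInt (xxbar n x) ((l : ℤ) - n)
      else hInt (xxbar n x) ((l : ℤ) - n + k) + hInt (xxbar n x) ((l : ℤ) - n - k))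
      * Zf x j (n - k)) n]
  exact (main_sum x hx j l hn).symm
end

section
/- Let λ be a partition of length ℓ with ℓ > n and λ_{n+1} = … = λ_ℓ = 1 (and λ₁,…,λ_n arbitrary parts ≥ 1). Then for one odd variable y, spo_λ(x₁,…,x_n; y) = (y^{ℓ−n}/D)·det( x_i^{μ_j+n−j+1} − x̄_i^{μ_j+n−j+1} + y(x_i^{μ_j+n−j} − x̄_i^{μ_j+n−j}) )_{1≤i,j≤n}, where μ = (λ₁,…,λ_n) and D = ∏_{i=1}^n (x_i − x̄_i) ∏_{1≤i<j≤n} (x_i + x̄_i − x_j − x̄_j). -/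
/-- The symplectic Schur function `sp_λ(x₁,…,x_n)` via the Weyl character formula. -/
noncomputable def spSchur {K : Type*} [Field K] {n : ℕ} (x : Fin n → K) (lam : Fin n → ℕ) : K :=
  (Matrix.of fun i j : Fin n =>
      x i ^ (lam j + (n - (j : ℕ))) - (x i)⁻¹ ^ (lam j + (n - (j : ℕ)))).det /
  (Matrix.of fun i j : Fin n =>
      x i ^ (n - (j : ℕ)) - (x i)⁻¹ ^ (n - (j : ℕ))).det

/-- The orthosymplectic Schur function `spo_λ(X;Y) = Σ_μ sp_μ(X) · s_{λ'/μ'}(Y)`, where the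
sum is over partitions `μ ⊆ λ` of length at most `n` (the skew Schur polynomial vanishes for
other `μ`), the skew Schur polynomial `s_{λ'/μ'}` being given by the Jacobi–Trudi determinant
`det(h_{λ'_i − μ'_j − i + j})` of size `λ₁ ≥ ℓ(λ')`.  Here `lam : ℕ → ℕ` is `λ` (0-indexed),
with all parts of `λ` among the first `L` entries. -/
noncomputable def spoSchur {K : Type*} [Field K] (n L : ℕ) {m : ℕ} (x : Fin n → K)
    (lam : ℕ → ℕ) (ys : Fin m → K) : K :=
  ∑ g : (i : Fin n) → Fin (lam i + 1),
    if ∀ i j : Fin n, i ≤ j → ((g j : ℕ) ≤ (g i : ℕ)) then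
      spSchur x (fun i => (g i : ℕ)) *
        (Matrix.of fun i j : Fin (lam 0) =>
          hInt ys
            (((((Finset.range L).filter fun t => (i : ℕ) + 1 ≤ lam t).card : ℤ))
              - (((Finset.univ : Finset (Fin n)).filter fun t => (j : ℕ) + 1 ≤ (g t : ℕ)).card : ℤ)
              - (i : ℕ) + (j : ℕ))).det
    else 0

section SpoLongColumnAux

open Polynomial Matrix Finset

variable {K : Type*} [Field K]

lemma hsym_one {K : Type*} [CommRing K] (y : K) (p : ℕ) : hsym ![y] p = y ^ p := by
  have hu : ∀ s : Sym (Fin 1) p, s = Sym.replicate p 0 := by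
    intro s
    have : (s : Multiset (Fin 1)) = Multiset.replicate p 0 := by
      rw [Multiset.eq_replicate]
      exact ⟨s.2, fun x _ => Subsingleton.elim x 0⟩
    exact Subtype.ext (by simpa [Sym.replicate] using this)
  rw [hsym]
  rw [Finset.sum_eq_single_of_mem (Sym.replicate p (0 : Fin 1)) (Finset.mem_univ _)
    (fun b _ hb => absurd (hu b) hb)]
  show ((Sym.replicate p (0 : Fin 1) : Multiset (Fin 1)).map ![y]).prod = y ^ p
  simp [Sym.replicate]

lemma hInt_one {K : Type*} [CommRing K] (y : K) (r : ℤ) :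
    hInt ![y] r = if r < 0 then 0 else y ^ r.toNat := by
  rw [hInt]
  split <;> simp [hsym_one]

/-- `Epoly k` satisfies `(x - x⁻¹) * Epoly k (x + x⁻¹) = x^(k+1) - x⁻¹^(k+1)`. -/
noncomputable def Epoly (K : Type*) [Field K] : ℕ → K[X]
  | 0 => 1
  | 1 => X
  | (k+2) => X * Epoly K (k+1) - Epoly K k

lemma Epoly_monic_deg (K : Type*) [Field K] : ∀ k, (Epoly K k).Monic ∧ (Epoly K k).natDegree = k := by
  have H : ∀ k, ((Epoly K k).Monic ∧ (Epoly K k).natDegree = k) ∧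
      ((Epoly K (k+1)).Monic ∧ (Epoly K (k+1)).natDegree = k+1) := by
    intro k
    induction k with
    | zero => exact ⟨⟨monic_one, natDegree_one⟩, ⟨monic_X, natDegree_X⟩⟩
    | succ k ih =>
      refine ⟨ih.2, ?_⟩
      have h1 : (X * Epoly K (k+1)).Monic := monic_X.mul ih.2.1
      have hd1 : (X * Epoly K (k+1)).natDegree = k + 2 := by
        rw [natDegree_mul X_ne_zero ih.2.1.ne_zero, natDegree_X, ih.2.2]; omega
      have hnd : (Epoly K k).natDegree < (X * Epoly K (k+1)).natDegree := by
        rw [hd1, ih.1.2]; omega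
      have hdeg : (Epoly K k).degree < (X * Epoly K (k+1)).degree :=
        lt_of_le_of_lt degree_le_natDegree
          (by rw [degree_eq_natDegree h1.ne_zero]; exact_mod_cast hnd)
      constructor
      · show (X * Epoly K (k+1) - Epoly K k).Monic
        exact h1.sub_of_left hdeg
      · show (X * Epoly K (k+1) - Epoly K k).natDegree = k + 2
        rw [natDegree_sub_eq_left_of_natDegree_lt hnd, hd1]
  exact fun k => (H k).1

lemma Epoly_eval {K : Type*} [Field K] (x : K) (hx : x ≠ 0) :
    ∀ k, (x - x⁻¹) * (Epoly K k).eval (x + x⁻¹) = x ^ (k+1) - x⁻¹ ^ (k+1) := by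
  have H : ∀ k, ((x - x⁻¹) * (Epoly K k).eval (x + x⁻¹) = x ^ (k+1) - x⁻¹ ^ (k+1)) ∧
      ((x - x⁻¹) * (Epoly K (k+1)).eval (x + x⁻¹) = x ^ (k+2) - x⁻¹ ^ (k+2)) := by
    intro k
    induction k with
    | zero =>
      refine ⟨by simp [Epoly], ?_⟩
      show (x - x⁻¹) * (X : K[X]).eval (x + x⁻¹) = _
      rw [eval_X]
      ring
    | succ k ih =>
      refine ⟨ih.2, ?_⟩
      show (x - x⁻¹) * (X * Epoly K (k+1) - Epoly K k).eval (x + x⁻¹) = _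
      rw [eval_sub, eval_mul, eval_X, mul_sub]
      rw [show (x - x⁻¹) * ((x + x⁻¹) * (Epoly K (k+1)).eval (x + x⁻¹)) =
        (x + x⁻¹) * ((x - x⁻¹) * (Epoly K (k+1)).eval (x + x⁻¹)) by ring, ih.2, ih.1]
      have hxx : x * x⁻¹ = 1 := mul_inv_cancel₀ hx
      linear_combination (x ^ (k+1) - x⁻¹ ^ (k+1)) * hxx
  exact fun k => (H k).1

-- product reindexing over pairs by reversal
lemma prod_Ioi_rev {K : Type*} [CommMonoid K] {n : ℕ} (f : Fin n → Fin n → K) :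
    (∏ i, ∏ j ∈ Finset.Ioi i, f (Fin.rev j) (Fin.rev i)) = ∏ i, ∏ j ∈ Finset.Ioi i, f i j := by
  rw [Finset.prod_sigma', Finset.prod_sigma']
  refine Finset.prod_nbij' (fun p => ⟨(p.2 : Fin n).rev, p.1.rev⟩)
    (fun p => ⟨(p.2 : Fin n).rev, p.1.rev⟩) ?_ ?_ ?_ ?_ ?_
  · intro p hp
    simp only [Finset.mem_sigma, Finset.mem_univ, Finset.mem_Ioi, true_and] at *
    exact Fin.rev_lt_rev.mpr hp
  · intro p hp
    simp only [Finset.mem_sigma, Finset.mem_univ, Finset.mem_Ioi, true_and] at *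
    exact Fin.rev_lt_rev.mpr hp
  · intro p _; simp
  · intro p _; simp
  · intro p _; rfl

lemma weyl_denom {K : Type*} [Field K] {n : ℕ} (x : Fin n → K) (hx : ∀ i, x i ≠ 0) :
    (Matrix.of fun i j : Fin n =>
      x i ^ (n - (j : ℕ)) - (x i)⁻¹ ^ (n - (j : ℕ))).det
    = (∏ i, (x i - (x i)⁻¹)) *
        ∏ i, ∏ j ∈ Finset.Ioi i, (x i + (x i)⁻¹ - x j - (x j)⁻¹) := by
  set z : Fin n → K := fun i => x i + (x i)⁻¹ with hz
  have hentry : ∀ i j : Fin n,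
      x i ^ (n - (j : ℕ)) - (x i)⁻¹ ^ (n - (j : ℕ))
        = (x i - (x i)⁻¹) * (Epoly K (n - 1 - (j : ℕ))).eval (z i) := by
    intro i j
    have : n - (j : ℕ) = (n - 1 - (j : ℕ)) + 1 := by omega
    rw [this, Epoly_eval (x i) (hx i)]
  have step1 : (Matrix.of fun i j : Fin n =>
      x i ^ (n - (j : ℕ)) - (x i)⁻¹ ^ (n - (j : ℕ))).det
      = (∏ i, (x i - (x i)⁻¹)) *
        (Matrix.of fun i j : Fin n => (Epoly K (n - 1 - (j : ℕ))).eval (z i)).det := by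
    rw [show (Matrix.of fun i j : Fin n =>
        x i ^ (n - (j : ℕ)) - (x i)⁻¹ ^ (n - (j : ℕ)))
        = Matrix.of (fun i j : Fin n =>
          (x i - (x i)⁻¹) * (Matrix.of fun i j : Fin n =>
            (Epoly K (n - 1 - (j : ℕ))).eval (z i)) i j) from by
      ext i j; exact hentry i j]
    exact Matrix.det_mul_column _ _
  rw [step1]
  congr 1
  -- reverse rows and columns
  have hsub : (Matrix.of fun i j : Fin n => (Epoly K (n - 1 - (j : ℕ))).eval (z i))
      = (Matrix.of fun i j : Fin n => (Epoly K (j : ℕ)).eval (z (Fin.rev i))).submatrix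
          Fin.revPerm Fin.revPerm := by
    ext i j
    simp only [Matrix.submatrix_apply, Matrix.of_apply, Fin.revPerm_apply, Fin.rev_rev]
    congr 2
    rw [Fin.val_rev]; omega
  rw [hsub, Matrix.det_submatrix_equiv_self,
    ← Matrix.det_eval_matrixOfPolynomials_eq_det_vandermonde (fun i => z (Fin.rev i))
      (fun j => Epoly K (j : ℕ)) (fun j => (Epoly_monic_deg K j).2)
      (fun j => (Epoly_monic_deg K j).1),
    Matrix.det_vandermonde]
  have := prod_Ioi_rev (n := n) (fun i j => z i - z j)
  rw [show (∏ i, ∏ j ∈ Finset.Ioi i, (x i + (x i)⁻¹ - x j - (x j)⁻¹))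
      = ∏ i, ∏ j ∈ Finset.Ioi i, (z i - z j) from by
    apply Finset.prod_congr rfl; intro i _; apply Finset.prod_congr rfl; intro j _; rw [hz]; ring]
  rw [← this]

noncomputable def fpow (y : K) (r : ℤ) : K := if r < 0 then 0 else y ^ r.toNat

lemma detf_strip {N : ℕ} (y : K) (a b : Fin N → ℤ) (hab : ∀ j, b j ≤ a j)
    (hs : ∀ i j : Fin N, (j : ℕ) < (i : ℕ) → a i < b j) :
    (Matrix.of fun i j : Fin N => fpow y (a i - b j)).det
      = ∏ j, y ^ (a j - b j).toNat := by
  rw [Matrix.det_of_upperTriangular]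
  · apply Finset.prod_congr rfl
    intro j _
    simp only [Matrix.of_apply, fpow, if_neg (by have := hab j; omega : ¬ (a j - b j < 0))]
  · intro i j hij
    simp only [Matrix.of_apply, fpow]
    have := hs i j hij
    rw [if_pos (by omega)]

lemma detf_zero {N : ℕ} (y : K) (a b : Fin N → ℤ) (ha : StrictAnti a) (hb : StrictAnti b)
    (hab : ∀ j, b j ≤ a j) (j0 : Fin N) (hj0 : (j0 : ℕ) + 1 < N)
    (hv : b j0 ≤ a ⟨(j0 : ℕ) + 1, hj0⟩) :
    (Matrix.of fun i j : Fin N => fpow y (a i - b j)).det = 0 := by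
  classical
  set E : Matrix (Fin N) (Fin N) K := Matrix.of fun i j : Fin N => fpow y (a i - b j) with hE
  set c : Fin N → K := fun i =>
    if h : (i : ℕ) + 1 < N then y ^ (a i - a ⟨(i : ℕ) + 1, h⟩).toNat else 0 with hc
  set U : Matrix (Fin N) (Fin N) K :=
    Matrix.of (fun i k : Fin N => if (k : ℕ) = (i : ℕ) + 1 then -(c i) else 0) with hU
  -- (1 + U) is unitriangular
  have hdetL : ((1 : Matrix (Fin N) (Fin N) K) + U).det = 1 := by
    rw [Matrix.det_of_upperTriangular]
    · rw [Finset.prod_eq_one]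
      intro i _
      simp only [Matrix.add_apply, Matrix.one_apply_eq, hU, Matrix.of_apply]
      rw [if_neg (by omega)]
      ring
    · intro i j hij
      have hij' : (j : ℕ) < (i : ℕ) := hij
      simp only [Matrix.add_apply, hU, Matrix.of_apply]
      rw [Matrix.one_apply_ne (by exact fun h => by omega), if_neg (by omega)]
      ring
  have hUE : ∀ i j, (U * E) i j
      = if h : (i : ℕ) + 1 < N then -(c i) * E ⟨(i : ℕ) + 1, h⟩ j else 0 := by
    intro i j
    rw [Matrix.mul_apply]
    split
    · next h =>
      rw [Finset.sum_eq_single (⟨(i : ℕ) + 1, h⟩ : Fin N)]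
      · simp only [hU, Matrix.of_apply]
        norm_num
      · intro k _ hk
        simp only [hU, Matrix.of_apply]
        rw [if_neg (fun hkk => hk (Fin.ext hkk))]
        ring
      · intro h'; exact absurd (Finset.mem_univ _) h'
    · next h =>
      apply Finset.sum_eq_zero
      intro k _
      simp only [hU, Matrix.of_apply]
      rw [if_neg (by omega)]
      ring
  -- entries of the row-reduced matrix
  have key : ∀ i j, ((1 + U) * E) i j
      = if b j ≤ a i ∧ (∀ h : (i : ℕ) + 1 < N, a ⟨(i : ℕ) + 1, h⟩ < b j)
        then y ^ (a i - b j).toNat else 0 := by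
    intro i j
    rw [Matrix.add_mul, Matrix.one_mul, Matrix.add_apply, hUE]
    by_cases h : (i : ℕ) + 1 < N
    · rw [dif_pos h]
      simp only [hE, Matrix.of_apply, fpow, hc]
      rw [dif_pos h]
      have haa' : a ⟨(i : ℕ) + 1, h⟩ < a i := ha (Fin.mk_lt_mk.mpr (by omega))
      by_cases h2 : b j ≤ a i
      · rw [if_neg (show ¬(a i - b j < 0) by omega)]
        by_cases h1 : b j ≤ a ⟨(i : ℕ) + 1, h⟩
        · rw [if_neg (show ¬(a ⟨(i : ℕ) + 1, h⟩ - b j < 0) by omega),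
            if_neg (show ¬(b j ≤ a i ∧ ∀ hh : (i : ℕ) + 1 < N, a ⟨(i : ℕ) + 1, hh⟩ < b j) from
              fun hcon => absurd (hcon.2 h) (by omega))]
          have hcomb : y ^ (a i - b j).toNat
              = y ^ (a i - a ⟨(i : ℕ) + 1, h⟩).toNat * y ^ (a ⟨(i : ℕ) + 1, h⟩ - b j).toNat := by
            rw [← pow_add]; congr 1; omega
          rw [hcomb]; ring
        · rw [if_pos (show a ⟨(i : ℕ) + 1, h⟩ - b j < 0 by omega),
            if_pos (show b j ≤ a i ∧ ∀ hh : (i : ℕ) + 1 < N, a ⟨(i : ℕ) + 1, hh⟩ < b j from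
              ⟨h2, fun hh => by
                rw [show (⟨(i : ℕ) + 1, hh⟩ : Fin N) = ⟨(i : ℕ) + 1, h⟩ from rfl]; omega⟩)]
          ring
      · rw [if_pos (show a i - b j < 0 by omega),
          if_pos (show a ⟨(i : ℕ) + 1, h⟩ - b j < 0 by omega),
          if_neg (show ¬(b j ≤ a i ∧ ∀ hh : (i : ℕ) + 1 < N, a ⟨(i : ℕ) + 1, hh⟩ < b j) from
            fun hcon => absurd hcon.1 h2)]
        ring
    · rw [dif_neg h, add_zero]
      simp only [hE, Matrix.of_apply, fpow]
      by_cases h2 : b j ≤ a i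
      · rw [if_neg (show ¬(a i - b j < 0) by omega),
          if_pos (show b j ≤ a i ∧ ∀ hh : (i : ℕ) + 1 < N, a ⟨(i : ℕ) + 1, hh⟩ < b j from
            ⟨h2, fun hh => absurd hh h⟩)]
      · rw [if_pos (show a i - b j < 0 by omega),
          if_neg (show ¬(b j ≤ a i ∧ ∀ hh : (i : ℕ) + 1 < N, a ⟨(i : ℕ) + 1, hh⟩ < b j) from
            fun hcon => absurd hcon.1 h2)]
  -- determinant of the reduced matrix vanishes
  have hdet : E.det = ((1 + U) * E).det := by
    rw [Matrix.det_mul, hdetL, one_mul]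
  rw [hdet, Matrix.det_apply]
  apply Finset.sum_eq_zero
  intro σ _
  convert smul_zero _
  by_contra hne
  have hfac : ∀ j : Fin N, ((1 + U) * E) (σ j) j ≠ 0 := by
    intro j hj
    exact hne (Finset.prod_eq_zero (Finset.mem_univ j) hj)
  have hcond : ∀ j : Fin N, b j ≤ a (σ j) ∧
      (∀ h : ((σ j : ℕ)) + 1 < N, a ⟨(σ j : ℕ) + 1, h⟩ < b j) := by
    intro j
    have := hfac j
    rw [key] at this
    by_contra hcc
    rw [if_neg hcc] at this
    exact this rfl
  -- σ is monotone
  have hmono : Monotone σ := by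
    intro j j' hjj'
    rcases eq_or_lt_of_le hjj' with rfl | hlt
    · exact le_refl _
    by_contra hgt
    push_neg at hgt
    have h1 : (σ j' : ℕ) + 1 < N := by
      have : (σ j' : ℕ) < (σ j : ℕ) := hgt
      have := (σ j).isLt
      omega
    have h2 : a ⟨(σ j' : ℕ) + 1, h1⟩ < b j' := (hcond j').2 h1
    have h3 : b j' < b j := hb hlt
    have h4 : b j ≤ a (σ j) := (hcond j).1
    have h5 : a (σ j) ≤ a ⟨(σ j' : ℕ) + 1, h1⟩ := by
      apply ha.antitone
      exact Fin.mk_le_mk.mpr (by exact hgt)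
    omega
  have hsm : StrictMono σ := hmono.strictMono_of_injective σ.injective
  -- hence σ x ≤ x for all x, using the inverse
  have hsymm : StrictMono σ.symm := by
    intro u v huv
    by_contra hle
    push_neg at hle
    exact absurd (hmono hle) (by simpa using huv)
  haveI : WellFoundedLT (Fin N) := Finite.to_wellFoundedLT
  have hle : (σ j0 : Fin N) ≤ j0 := by
    have := hsymm.le_apply (x := j0)
    calc σ j0 ≤ σ (σ.symm j0) := hmono (by exact_mod_cast this)
    _ = j0 := σ.apply_symm_apply j0
  -- contradiction at column j0
  have h1 : (σ j0 : ℕ) + 1 < N := by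
    have : (σ j0 : ℕ) ≤ (j0 : ℕ) := hle
    omega
  have h2 := (hcond j0).2 h1
  have h3 : a ⟨(j0 : ℕ) + 1, hj0⟩ ≤ a ⟨(σ j0 : ℕ) + 1, h1⟩ := by
    apply ha.antitone
    exact Fin.mk_le_mk.mpr (by have : (σ j0 : ℕ) ≤ (j0 : ℕ) := hle; omega)
  omega

lemma sum_card_filter {α : Type*} (s : Finset α) (N : ℕ) (f : α → ℕ) (hf : ∀ t ∈ s, f t ≤ N) :
    ∑ i ∈ Finset.range N, (s.filter fun t => i + 1 ≤ f t).card = ∑ t ∈ s, f t := by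
  have h1 : ∀ i, (s.filter fun t => i + 1 ≤ f t).card = ∑ t ∈ s, if i + 1 ≤ f t then 1 else 0 :=
    fun i => Finset.card_filter _ _
  simp_rw [h1]
  rw [Finset.sum_comm]
  apply Finset.sum_congr rfl
  intro t ht
  rw [← Finset.card_filter]
  rw [show (Finset.range N).filter (fun i => i + 1 ≤ f t) = Finset.range (f t) from by
    ext u; simp only [Finset.mem_filter, Finset.mem_range]; constructor
    · rintro ⟨_, h⟩; omega
    · intro h; exact ⟨by have := hf t ht; omega, by omega⟩]
  exact Finset.card_range _

lemma JT_eval {K : Type*} [Field K] (n ℓ : ℕ) (hnl : n < ℓ) (y : K) (lam : ℕ → ℕ)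
    (hA : Antitone lam) (h1 : ∀ i, n ≤ i → i < ℓ → lam i = 1)
    (g : (i : Fin n) → Fin (lam i + 1))
    (hP : ∀ i j : Fin n, i ≤ j → ((g j : ℕ) ≤ (g i : ℕ))) :
    (Matrix.of fun i j : Fin (lam 0) =>
      hInt ![y]
        (((((Finset.range ℓ).filter fun t => (i : ℕ) + 1 ≤ lam t).card : ℤ))
          - (((Finset.univ : Finset (Fin n)).filter fun t => (j : ℕ) + 1 ≤ (g t : ℕ)).card : ℤ)
          - (i : ℕ) + (j : ℕ))).det
    = if ∀ t : Fin n, lam ↑t ≤ (g t : ℕ) + 1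
      then y ^ ((ℓ - n) + (∑ t : Fin n, (lam ↑t - (g t : ℕ))))
      else 0 := by
  classical
  set N := lam 0 with hNdef
  have hl1 : ∀ t, t < ℓ → 1 ≤ lam t := by
    intro t ht
    by_cases h : n ≤ t
    · rw [h1 t h ht]
    · have h2 : lam n ≤ lam t := hA (by omega)
      rw [h1 n le_rfl hnl] at h2
      omega
  have hlamN : ∀ t, lam t ≤ N := fun t => hA (Nat.zero_le t)
  have hN1 : 1 ≤ N := hl1 0 (by omega)
  set Lc : ℕ → ℕ := fun i => ((Finset.range ℓ).filter fun t => i + 1 ≤ lam t).card with hLc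
  set Gc : ℕ → ℕ := fun j =>
    ((Finset.univ : Finset (Fin n)).filter fun t => j + 1 ≤ (g t : ℕ)).card with hGc
  have hgle : ∀ t : Fin n, (g t : ℕ) ≤ lam ↑t := fun t => Fin.is_le (g t)
  have hLcmono : ∀ i j : ℕ, i ≤ j → Lc j ≤ Lc i := by
    intro i j hij
    apply Finset.card_le_card
    apply Finset.monotone_filter_right
    intro t ht
    omega
  have hGcmono : ∀ i j : ℕ, i ≤ j → Gc j ≤ Gc i := by
    intro i j hij
    apply Finset.card_le_card
    apply Finset.monotone_filter_right
    intro t ht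
    omega
  have hGle : ∀ j : ℕ, Gc j ≤ Lc j := by
    intro j
    apply Finset.card_le_card_of_injOn (fun t : Fin n => (t : ℕ))
    · intro t ht
      simp only [Finset.mem_coe, Finset.mem_filter, Finset.mem_univ, true_and] at ht
      simp only [Finset.mem_coe, Finset.mem_filter, Finset.mem_range]
      exact ⟨by have := t.isLt; omega, by have := hgle t; omega⟩
    · intro t1 _ t2 _ h
      exact Fin.ext h
  set a : Fin N → ℤ := fun i => (Lc ↑i : ℤ) - ↑i with ha
  set b : Fin N → ℤ := fun j => (Gc ↑j : ℤ) - ↑j with hb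
  have hamono : StrictAnti a := by
    intro i j hij
    have h2 : Lc ↑j ≤ Lc ↑i := hLcmono _ _ (le_of_lt hij)
    have h3 : (i : ℕ) < (j : ℕ) := hij
    simp only [ha]
    omega
  have hbmono : StrictAnti b := by
    intro i j hij
    have h2 : Gc ↑j ≤ Gc ↑i := hGcmono _ _ (le_of_lt hij)
    have h3 : (i : ℕ) < (j : ℕ) := hij
    simp only [hb]
    omega
  have hab : ∀ j : Fin N, b j ≤ a j := by
    intro j
    have := hGle ↑j
    simp only [ha, hb]
    omega
  have hmat : (Matrix.of fun i j : Fin N =>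
      hInt ![y]
        (((((Finset.range ℓ).filter fun t => (i : ℕ) + 1 ≤ lam t).card : ℤ))
          - (((Finset.univ : Finset (Fin n)).filter fun t => (j : ℕ) + 1 ≤ (g t : ℕ)).card : ℤ)
          - (i : ℕ) + (j : ℕ)))
      = Matrix.of fun i j : Fin N => fpow y (a i - b j) := by
    ext i j
    simp only [Matrix.of_apply]
    rw [hInt_one]
    show _ = fpow y (a i - b j)
    rw [fpow]
    congr 1 <;> · simp only [ha, hb, hLc, hGc]; ring
  rw [hmat]
  by_cases hgood : ∀ t : Fin n, lam ↑t ≤ (g t : ℕ) + 1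
  · -- horizontal strip case: upper triangular determinant
    have hLG : ∀ j : ℕ, Lc (j + 1) ≤ Gc j := by
      intro j
      rcases Nat.eq_zero_or_pos n with hn | hn
      · have : Lc (j + 1) = 0 := by
          simp only [hLc]
          rw [Finset.card_eq_zero, Finset.filter_eq_empty_iff]
          intro t ht
          rw [Finset.mem_range] at ht
          rw [h1 t (by omega) ht]
          omega
        omega
      · apply Finset.card_le_card_of_injOn
          (fun t : ℕ => if h : t < n then (⟨t, h⟩ : Fin n) else ⟨0, hn⟩)
        · intro t ht
          simp only [Finset.mem_coe, Finset.mem_filter, Finset.mem_range] at ht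
          have htn : t < n := by
            by_contra hc
            rw [h1 t (by omega) ht.1] at ht
            omega
          simp only [Finset.mem_coe, Finset.mem_filter, Finset.mem_univ, true_and]
          rw [dif_pos htn]
          have := hgood ⟨t, htn⟩
          simp only [Fin.val_mk] at this ⊢
          omega
        · intro t1 h1' t2 h2' heq
          simp only [Finset.mem_coe, Finset.mem_filter, Finset.mem_range] at h1' h2'
          have htn1 : t1 < n := by
            by_contra hc
            rw [h1 t1 (by omega) h1'.1] at h1'
            omega
          have htn2 : t2 < n := by
            by_contra hc
            rw [h1 t2 (by omega) h2'.1] at h2'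
            omega
          simp only [dif_pos htn1, dif_pos htn2, Fin.mk.injEq] at heq
          exact heq
    rw [if_pos hgood]
    rw [detf_strip y a b hab]
    · rw [Finset.prod_pow_eq_pow_sum]
      congr 1
      -- sum of exponents
      have hterm : ∀ j : Fin N, (a j - b j).toNat = Lc ↑j - Gc ↑j := by
        intro j
        have := hGle (j : ℕ)
        simp only [ha, hb]
        omega
      have e1 : ∑ j : Fin N, (a j - b j).toNat = ∑ j ∈ Finset.range N, (Lc j - Gc j) := by
        rw [← Fin.sum_univ_eq_sum_range (fun j => Lc j - Gc j) N]
        exact Finset.sum_congr rfl fun j _ => hterm j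
      have e2 : ∑ j ∈ Finset.range N, (Lc j - Gc j) + ∑ j ∈ Finset.range N, Gc j
          = ∑ j ∈ Finset.range N, Lc j := by
        rw [← Finset.sum_add_distrib]
        exact Finset.sum_congr rfl fun j _ => by have := hGle j; omega
      have e3 : ∑ j ∈ Finset.range N, Lc j = ∑ t ∈ Finset.range ℓ, lam t := by
        simp only [hLc]
        exact sum_card_filter _ _ _ (fun t _ => hlamN t)
      have e4 : ∑ j ∈ Finset.range N, Gc j = ∑ t : Fin n, (g t : ℕ) := by
        simp only [hGc]
        exact sum_card_filter _ _ _ (fun t _ => le_trans (hgle t) (hlamN ↑t))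
      have e5 : ∑ t ∈ Finset.range ℓ, lam t = (ℓ - n) + ∑ t : Fin n, lam ↑t := by
        have h2 : ∑ i ∈ Finset.range n, lam i + ∑ i ∈ Finset.Ico n ℓ, lam i
            = ∑ i ∈ Finset.range ℓ, lam i := by
          simpa using Finset.sum_Ico_consecutive lam (Nat.zero_le n) (le_of_lt hnl)
        have e6 : ∑ t ∈ Finset.Ico n ℓ, lam t = ℓ - n := by
          have hc : ∀ t ∈ Finset.Ico n ℓ, lam t = 1 := fun t ht => by
            rw [Finset.mem_Ico] at ht
            exact h1 t ht.1 ht.2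
          rw [Finset.sum_congr rfl hc, Finset.sum_const, Nat.card_Ico, smul_eq_mul, mul_one]
        rw [Fin.sum_univ_eq_sum_range (fun t => lam t) n]
        omega
      have e7 : ∑ t : Fin n, (lam ↑t - (g t : ℕ)) + ∑ t : Fin n, (g t : ℕ)
          = ∑ t : Fin n, lam ↑t := by
        rw [← Finset.sum_add_distrib]
        exact Finset.sum_congr rfl fun t _ => by have := hgle t; omega
      omega
    · -- strictly upper triangular vanishing below diagonal
      intro i j hij
      have e1 : Lc ↑i ≤ Lc (↑j + 1) := hLcmono _ _ (by omega)
      have e2 : Lc (↑j + 1) ≤ Gc ↑j := hLG ↑j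
      simp only [ha, hb]
      omega
  · rw [if_neg hgood]
    push_neg at hgood
    obtain ⟨i0, hi0⟩ := hgood
    have hgN : (g i0 : ℕ) + 2 ≤ N := by
      have := hA (Nat.zero_le (i0 : ℕ))
      omega
    have e1 : Gc (g i0 : ℕ) ≤ (i0 : ℕ) := by
      simp only [hGc]
      refine le_trans (Finset.card_le_card_of_injOn (fun t : Fin n => (t : ℕ)) ?_ ?_)
        (le_of_eq (Finset.card_range _))
      · intro t ht
        simp only [Finset.mem_coe, Finset.mem_filter, Finset.mem_univ, true_and] at ht
        simp only [Finset.mem_coe, Finset.mem_range]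
        by_contra hc
        have : i0 ≤ t := by
          apply Fin.le_def.mpr
          omega
        have := hP i0 t this
        omega
      · intro t1 _ t2 _ h
        exact Fin.ext h
    have e2 : (i0 : ℕ) + 1 ≤ Lc ((g i0 : ℕ) + 1) := by
      have : Finset.range ((i0 : ℕ) + 1)
          ⊆ (Finset.range ℓ).filter fun t => (g i0 : ℕ) + 1 + 1 ≤ lam t := by
        intro t ht
        rw [Finset.mem_range] at ht
        have htn : t ≤ (i0 : ℕ) := by omega
        have h3 : lam (i0 : ℕ) ≤ lam t := hA htn
        simp only [Finset.mem_filter, Finset.mem_range]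
        have := i0.isLt
        exact ⟨by omega, by omega⟩
      have := Finset.card_le_card this
      simp only [hLc]
      simpa using this
    exact detf_zero y a b hamono hbmono hab ⟨(g i0 : ℕ), by omega⟩ (by show (g i0 : ℕ) + 1 < N; omega)
      (by simp only [ha, hb]; push_cast; omega)

lemma det_add_cols {N : ℕ} (A B : Matrix (Fin N) (Fin N) K) :
    (A + B).det = ∑ S : Finset (Fin N),
      (Matrix.of fun i j : Fin N => if j ∈ S then B i j else A i j).det := by
  classical
  rw [Matrix.det_apply]
  have h1 : ∀ σ : Equiv.Perm (Fin N),
      ∏ j, (A + B) (σ j) j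
        = ∑ S : Finset (Fin N),
            ∏ j, (Matrix.of fun i j : Fin N => if j ∈ S then B i j else A i j) (σ j) j := by
    intro σ
    have h2 := Finset.prod_add (fun j : Fin N => B (σ j) j) (fun j : Fin N => A (σ j) j)
      Finset.univ
    rw [show (∏ j, (A + B) (σ j) j) = ∏ j, (B (σ j) j + A (σ j) j) from
      Finset.prod_congr rfl fun j _ => by rw [Matrix.add_apply]; ring, h2,
      ← Finset.powerset_univ]
    apply Finset.sum_congr rfl
    intro S _
    rw [show (∏ j, (Matrix.of fun i j : Fin N => if j ∈ S then B i j else A i j) (σ j) j)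
        = ∏ j, (if j ∈ S then B (σ j) j else A (σ j) j) from rfl, Finset.prod_ite]
    congr 1
    · apply Finset.prod_congr _ fun j _ => rfl
      ext j; simp
    · apply Finset.prod_congr _ fun j _ => rfl
      ext j; simp [Finset.mem_sdiff]
  calc ∑ σ : Equiv.Perm (Fin N), Equiv.Perm.sign σ • ∏ j, (A + B) (σ j) j
      = ∑ σ : Equiv.Perm (Fin N), ∑ S : Finset (Fin N), Equiv.Perm.sign σ •
          ∏ j, (Matrix.of fun i j : Fin N => if j ∈ S then B i j else A i j) (σ j) j := by
        apply Finset.sum_congr rfl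
        intro σ _
        rw [h1, Finset.smul_sum]
    _ = ∑ S : Finset (Fin N), ∑ σ : Equiv.Perm (Fin N), Equiv.Perm.sign σ •
          ∏ j, (Matrix.of fun i j : Fin N => if j ∈ S then B i j else A i j) (σ j) j :=
        Finset.sum_comm
    _ = _ := by
        apply Finset.sum_congr rfl
        intro S _
        rw [Matrix.det_apply]

lemma exists_adjacent_lt {n : ℕ} (f : Fin n → ℕ)
    (h : ¬ ∀ i j : Fin n, i ≤ j → f j ≤ f i) :
    ∃ (k : ℕ) (hk : k + 1 < n), f ⟨k, by omega⟩ < f ⟨k + 1, hk⟩ := by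
  by_contra hno
  push_neg at hno
  apply h
  have key : ∀ d : ℕ, ∀ i j : Fin n, (j : ℕ) = (i : ℕ) + d → f j ≤ f i := by
    intro d
    induction d with
    | zero =>
      intro i j hj
      have : i = j := Fin.ext (by omega)
      rw [this]
    | succ d ih =>
      intro i j hj
      have hk : (i : ℕ) + d + 1 < n := by have := j.isLt; omega
      have hjj : j = ⟨(i : ℕ) + d + 1, hk⟩ := Fin.ext (by simp only [Fin.val_mk]; omega)
      rw [hjj]
      exact le_trans (hno ((i : ℕ) + d) hk) (ih i ⟨(i : ℕ) + d, by omega⟩ rfl)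
  intro i j hij
  exact key ((j : ℕ) - (i : ℕ)) i j (by have : (i : ℕ) ≤ (j : ℕ) := hij; omega)

end SpoLongColumnAux

/-- For `λ` of length `ℓ > n` with `λ_{n+1} = ⋯ = λ_ℓ = 1`:
`spo_λ(x₁,…,x_n; y) = (y^{ℓ−n}/D) · det(x_i^{μ_j+n−j+1} − x̄_i^{μ_j+n−j+1}
+ y(x_i^{μ_j+n−j} − x̄_i^{μ_j+n−j}))` where `μ = (λ₁,…,λ_n)`. -/
theorem spo_long_column {K : Type*} [Field K] (n ℓ : ℕ) (hnl : n < ℓ)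
    (x : Fin n → K) (hx : ∀ i, x i ≠ 0) (y : K)
    (lam : ℕ → ℕ) (hA : Antitone lam)
    (h1 : ∀ i, n ≤ i → i < ℓ → lam i = 1) (h0 : ∀ i, ℓ ≤ i → lam i = 0) :
    spoSchur n ℓ x lam ![y]
      = (y ^ (ℓ - n) /
          ((∏ i, (x i - (x i)⁻¹)) *
            ∏ i, ∏ j ∈ Finset.Ioi i, (x i + (x i)⁻¹ - x j - (x j)⁻¹))) *
        (Matrix.of fun i j : Fin n =>
          x i ^ (lam j + (n - (j : ℕ))) - (x i)⁻¹ ^ (lam j + (n - (j : ℕ)))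
            + y * (x i ^ (lam j + (n - 1 - (j : ℕ)))
              - (x i)⁻¹ ^ (lam j + (n - 1 - (j : ℕ))))).det := by
  classical
  have hlamn1 : ∀ t : Fin n, 1 ≤ lam ↑t := by
    intro t
    have h2 : lam n ≤ lam ↑t := hA (le_of_lt t.isLt)
    rw [h1 n le_rfl hnl] at h2
    omega
  set eS : Finset (Fin n) → ((i : Fin n) → Fin (lam ↑i + 1)) := fun S i =>
    ⟨lam ↑i - (if i ∈ S then 1 else 0), by split <;> omega⟩ with heS
  set numdet : Finset (Fin n) → K := fun S =>
    (Matrix.of fun i j : Fin n => x i ^ ((eS S j : ℕ) + (n - (j : ℕ)))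
      - (x i)⁻¹ ^ ((eS S j : ℕ) + (n - (j : ℕ)))).det with hnum
  set D : K := (∏ i, (x i - (x i)⁻¹)) *
      ∏ i, ∏ j ∈ Finset.Ioi i, (x i + (x i)⁻¹ - x j - (x j)⁻¹) with hD
  -- non-antitone choice gives vanishing numerator
  have hnum0 : ∀ S : Finset (Fin n),
      ¬ (∀ i j : Fin n, i ≤ j → ((eS S j : ℕ) ≤ (eS S i : ℕ))) → numdet S = 0 := by
    intro S hS
    obtain ⟨k, hk, hlt⟩ := exists_adjacent_lt (fun t => (eS S t : ℕ)) hS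
    have hkn : k < n := by omega
    have hm : lam (k + 1) ≤ lam k := hA (by omega)
    have hl1 : 1 ≤ lam k := hlamn1 ⟨k, hkn⟩
    have hee : (eS S ⟨k, hkn⟩ : ℕ) + (n - k) = (eS S ⟨k + 1, hk⟩ : ℕ) + (n - (k + 1)) := by
      simp only [heS, Fin.val_mk] at hlt ⊢
      split_ifs at hlt ⊢ <;> omega
    rw [hnum]
    apply Matrix.det_zero_of_column_eq
      (show (⟨k, hkn⟩ : Fin n) ≠ ⟨k + 1, hk⟩ from fun hh => by
        have := Fin.mk.injEq k hkn (k+1) hk ▸ hh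
        omega)
    intro i
    simp only [Matrix.of_apply, Fin.val_mk]
    rw [hee]
  -- evaluate LHS
  rw [spoSchur]
  have hterm : ∀ g : (i : Fin n) → Fin (lam ↑i + 1),
      (if ∀ i j : Fin n, i ≤ j → ((g j : ℕ) ≤ (g i : ℕ)) then
        spSchur x (fun i => (g i : ℕ)) *
          (Matrix.of fun i j : Fin (lam 0) =>
            hInt ![y]
              (((((Finset.range ℓ).filter fun t => (i : ℕ) + 1 ≤ lam t).card : ℤ))
                - (((Finset.univ : Finset (Fin n)).filter
                    fun t => (j : ℕ) + 1 ≤ (g t : ℕ)).card : ℤ)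
                - (i : ℕ) + (j : ℕ))).det
      else 0)
      = if ∀ i j : Fin n, i ≤ j → ((g j : ℕ) ≤ (g i : ℕ)) then
          spSchur x (fun i => (g i : ℕ)) *
            (if ∀ t : Fin n, lam ↑t ≤ (g t : ℕ) + 1
             then y ^ ((ℓ - n) + (∑ t : Fin n, (lam ↑t - (g t : ℕ)))) else 0)
        else 0 := by
    intro g
    by_cases h : ∀ i j : Fin n, i ≤ j → ((g j : ℕ) ≤ (g i : ℕ))
    · rw [if_pos h, if_pos h, JT_eval n ℓ hnl y lam hA h1 g h]
    · rw [if_neg h, if_neg h]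
  rw [Finset.sum_congr rfl (fun g _ => hterm g)]
  -- restrict to the support and reindex by subsets
  rw [show (∑ g : (i : Fin n) → Fin (lam ↑i + 1),
      if ∀ i j : Fin n, i ≤ j → ((g j : ℕ) ≤ (g i : ℕ)) then
        spSchur x (fun i => (g i : ℕ)) *
          (if ∀ t : Fin n, lam ↑t ≤ (g t : ℕ) + 1
           then y ^ ((ℓ - n) + (∑ t : Fin n, (lam ↑t - (g t : ℕ)))) else 0)
      else 0)
    = ∑ g ∈ Finset.univ.filter (fun g : (i : Fin n) → Fin (lam ↑i + 1) =>
        ∀ t : Fin n, lam ↑t ≤ (g t : ℕ) + 1),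
      (if ∀ i j : Fin n, i ≤ j → ((g j : ℕ) ≤ (g i : ℕ)) then
        spSchur x (fun i => (g i : ℕ)) *
          (if ∀ t : Fin n, lam ↑t ≤ (g t : ℕ) + 1
           then y ^ ((ℓ - n) + (∑ t : Fin n, (lam ↑t - (g t : ℕ)))) else 0)
      else 0) from (Finset.sum_filter_of_ne (fun g _ hne => by
        by_contra hc
        apply hne
        rw [if_neg hc]
        · split <;> simp [if_neg hc]
        )).symm]
  -- reindex the sum by subsets
  have hgoodS : ∀ (S : Finset (Fin n)) (t : Fin n), lam ↑t ≤ (eS S t : ℕ) + 1 := by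
    intro S t
    have := hlamn1 t
    simp only [heS, Fin.val_mk]
    split_ifs <;> omega
  have hbij : (∑ g ∈ Finset.univ.filter (fun g : (i : Fin n) → Fin (lam ↑i + 1) =>
        ∀ t : Fin n, lam ↑t ≤ (g t : ℕ) + 1),
      (if ∀ i j : Fin n, i ≤ j → ((g j : ℕ) ≤ (g i : ℕ)) then
        spSchur x (fun i => (g i : ℕ)) *
          (if ∀ t : Fin n, lam ↑t ≤ (g t : ℕ) + 1
           then y ^ ((ℓ - n) + (∑ t : Fin n, (lam ↑t - (g t : ℕ)))) else 0)
      else 0))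
      = ∑ S : Finset (Fin n), numdet S * y ^ ((ℓ - n) + S.card) / D := by
    refine (Finset.sum_nbij' (i := eS)
      (j := fun g => Finset.univ.filter (fun t : Fin n => (g t : ℕ) < lam ↑t))
      ?_ ?_ ?_ ?_ ?_).symm
    · intro S _
      rw [Finset.mem_filter]
      exact ⟨Finset.mem_univ _, hgoodS S⟩
    · intro g _
      exact Finset.mem_univ _
    · intro S _
      ext t
      rw [Finset.mem_filter]
      have := hlamn1 t
      simp only [Finset.mem_univ, true_and, heS, Fin.val_mk]
      constructor
      · intro h2
        by_contra hc
        rw [if_neg hc] at h2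
        omega
      · intro h2
        rw [if_pos h2]
        omega
    · intro g hg
      rw [Finset.mem_filter] at hg
      funext t
      apply Fin.ext
      have h2 := hg.2 t
      have h3 : (g t : ℕ) ≤ lam ↑t := Fin.is_le (g t)
      simp only [heS, Fin.val_mk, Finset.mem_filter, Finset.mem_univ, true_and]
      split_ifs with h4 <;> omega
    · intro S _
      have hgood := hgoodS S
      have hcard : (∑ t : Fin n, (lam ↑t - (eS S t : ℕ))) = S.card := by
        have hterm2 : ∀ t : Fin n, lam ↑t - (eS S t : ℕ) = if t ∈ S then 1 else 0 := by
          intro t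
          have := hlamn1 t
          simp only [heS, Fin.val_mk]
          split_ifs <;> omega
        rw [Finset.sum_congr rfl (fun t _ => hterm2 t), Finset.sum_ite_mem,
          Finset.univ_inter, Finset.sum_const, smul_eq_mul, mul_one]
      by_cases hPS : ∀ i j : Fin n, i ≤ j → ((eS S j : ℕ) ≤ (eS S i : ℕ))
      · rw [if_pos hPS, if_pos hgood, hcard]
        simp only [spSchur, hnum]
        rw [weyl_denom x hx, ← hD, div_mul_eq_mul_div]
      · rw [if_neg hPS, hnum0 S hPS]
        simp
  rw [hbij]
  -- now expand the right-hand side determinant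
  set AM : Matrix (Fin n) (Fin n) K := Matrix.of fun i j : Fin n =>
    x i ^ (lam ↑j + (n - (j : ℕ))) - (x i)⁻¹ ^ (lam ↑j + (n - (j : ℕ))) with hAM
  set BM : Matrix (Fin n) (Fin n) K := Matrix.of fun i j : Fin n =>
    y * (x i ^ (lam ↑j + (n - 1 - (j : ℕ))) - (x i)⁻¹ ^ (lam ↑j + (n - 1 - (j : ℕ)))) with hBM
  have hsplitM : (Matrix.of fun i j : Fin n =>
      x i ^ (lam ↑j + (n - (j : ℕ))) - (x i)⁻¹ ^ (lam ↑j + (n - (j : ℕ)))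
        + y * (x i ^ (lam ↑j + (n - 1 - (j : ℕ)))
          - (x i)⁻¹ ^ (lam ↑j + (n - 1 - (j : ℕ))))) = AM + BM := by
    ext i j
    simp only [hAM, hBM, Matrix.add_apply, Matrix.of_apply]
  rw [hsplitM, det_add_cols AM BM, Finset.mul_sum]
  apply Finset.sum_congr rfl
  intro S _
  have h3 : (Matrix.of fun i j : Fin n => if j ∈ S then BM i j else AM i j)
      = Matrix.of fun i j : Fin n => (if j ∈ S then y else 1) *
          (Matrix.of fun i j : Fin n =>
            x i ^ ((eS S j : ℕ) + (n - (j : ℕ)))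
              - (x i)⁻¹ ^ ((eS S j : ℕ) + (n - (j : ℕ)))) i j := by
    ext i j
    have hj := hlamn1 j
    have hjn := j.isLt
    simp only [hAM, hBM, heS, Fin.val_mk, Matrix.of_apply]
    by_cases hjS : j ∈ S
    · rw [if_pos hjS, if_pos hjS, if_pos hjS,
        show lam ↑j - 1 + (n - (j : ℕ)) = lam ↑j + (n - 1 - (j : ℕ)) from by omega]
    · rw [if_neg hjS, if_neg hjS, if_neg hjS, one_mul,
        show lam ↑j - 0 + (n - (j : ℕ)) = lam ↑j + (n - (j : ℕ)) from by omega]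
  rw [h3, Matrix.det_mul_row]
  have h4 : (∏ j : Fin n, if j ∈ S then y else 1) = y ^ S.card := by
    rw [Finset.prod_ite_mem, Finset.univ_inter, Finset.prod_const]
  rw [h4]
  simp only [hnum]
  rw [pow_add, div_eq_mul_inv, div_eq_mul_inv]
  ring
end
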